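/- Let σ0 ∈ ℕ and let (λ^{(σ)}_n)_{n∈ℕ}, σ = 1,…,σ0, be finitely many sequences of positive integers. Then there exists a permutation π of {1,…,σ0} such that the rearranged sequences (λ^{(π(σ))}_n), σ = 1,…,σ0, are well ordered, i.e. limsup_n λ^{(π(σ+1))}_n/λ^{(π(σ))}_n ≥ limsup_n λ^{(π(σ))}_n/λ^{(π(σ+1))}_n for every σ = 1,…,σ0−1. -/

import Mathlib

open Filter Topology
open scoped ENNReal

private lemma insert_chain {α : Type*} (r : α → α → Prop)
    (htot : ∀ a b, r a b ∨ r b a) (a : α) :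
    ∀ l : List α, l.Chain' r →
      ∃ l', (a :: l).Perm l' ∧ l'.Chain' r ∧
        (l'.head? = some a ∨ l'.head? = l.head?) := by
  intro l
  induction l with
  | nil => intro _; exact ⟨[a], List.Perm.refl _, List.isChain_singleton a, Or.inl rfl⟩
  | cons b t ih =>
    intro hc
    replace hc := List.isChain_cons.mp hc
    obtain ⟨hb, ht⟩ := hc
    rcases htot a b with hab | hba
    · refine ⟨a :: b :: t, List.Perm.refl _, ?_, Or.inl rfl⟩
      refine List.isChain_cons.mpr ?_
      exact ⟨fun x hx => by simp at hx; subst hx; exact hab, List.isChain_cons.mpr ⟨hb, ht⟩⟩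
    · obtain ⟨t', hperm, hchain, hhead⟩ := ih ht
      refine ⟨b :: t', ?_, ?_, Or.inr rfl⟩
      · exact (List.Perm.swap b a t).trans (hperm.cons b)
      · refine List.isChain_cons.mpr ?_
        refine ⟨fun x hx => ?_, hchain⟩
        rcases hhead with h1 | h1
        · rw [h1] at hx; simp at hx; subst hx; exact hba
        · exact hb x (h1 ▸ hx)

private lemma exists_chain_perm {α : Type*} (r : α → α → Prop)
    (htot : ∀ a b, r a b ∨ r b a) :
    ∀ l : List α, ∃ l', l.Perm l' ∧ l'.Chain' r := by
  intro l
  induction l with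
  | nil => exact ⟨[], List.Perm.refl _, List.isChain_nil⟩
  | cons a t ih =>
    obtain ⟨t', hperm, hchain⟩ := ih
    obtain ⟨l', hperm', hchain', _⟩ := insert_chain r htot a t' hchain
    exact ⟨l', (hperm.cons a).trans hperm', hchain'⟩

/-- Any finite family of sequences of positive integers admits a
rearrangement (given by a permutation `π` of the index set) which is well ordered,
i.e. `limsup λ^{(π(σ+1))}_n / λ^{(π(σ))}_n ≥ limsup λ^{(π(σ))}_n / λ^{(π(σ+1))}_n`
for every consecutive pair of indices (limits superior taken in `[0,∞]`). -/
theorem stmt0 (σ0 : ℕ) (Λ : Fin σ0 → ℕ → ℕ) (hpos : ∀ σ n, 0 < Λ σ n) :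
    ∃ π : Equiv.Perm (Fin σ0),
      ∀ (i : ℕ) (h : i + 1 < σ0),
        limsup
            (fun n => ((Λ (π ⟨i, Nat.lt_of_succ_lt h⟩) n : ℝ≥0∞) /
              (Λ (π ⟨i + 1, h⟩) n : ℝ≥0∞))) atTop ≤
          limsup
            (fun n => ((Λ (π ⟨i + 1, h⟩) n : ℝ≥0∞) /
              (Λ (π ⟨i, Nat.lt_of_succ_lt h⟩) n : ℝ≥0∞))) atTop := by
  set r : Fin σ0 → Fin σ0 → Prop := fun a b =>
    limsup (fun n => ((Λ a n : ℝ≥0∞) / (Λ b n : ℝ≥0∞))) atTop ≤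
      limsup (fun n => ((Λ b n : ℝ≥0∞) / (Λ a n : ℝ≥0∞))) atTop with hr
  have htot : ∀ a b, r a b ∨ r b a := fun a b => le_total _ _
  obtain ⟨l, hperm, hchain⟩ := exists_chain_perm r htot (List.finRange σ0)
  have hnd : l.Nodup := hperm.nodup_iff.mp (List.nodup_finRange σ0)
  have hmem : ∀ x : Fin σ0, x ∈ l := fun x => hperm.mem_iff.mp (List.mem_finRange x)
  have hlen : l.length = σ0 := by
    rw [← hperm.length_eq, List.length_finRange]
  let e : Fin σ0 ≃ Fin σ0 :=
    (finCongr hlen.symm).trans (hnd.getEquivOfForallMemList l hmem)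
  refine ⟨e, fun i h => ?_⟩
  have h1 : i + 1 < l.length := by omega
  have := List.isChain_iff_getElem.mp hchain i h1
  have he1 : e ⟨i, Nat.lt_of_succ_lt h⟩ = l.get ⟨i, by omega⟩ := rfl
  have he2 : e ⟨i + 1, h⟩ = l.get ⟨i + 1, h1⟩ := rfl
  rw [he1, he2]
  exact this
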